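/- Let K be a field, A = K[x₁,…,xₙ], and suppose θ and e_{ij} (1 ≤ i,j ≤ n) are K-algebra endomorphisms of A satisfying: θ∘θ = θ; θ∘e_{ij} = e_{ij}∘θ = θ for all i,j; e_{ij}∘e_{km} = e_{im} whenever j = k and e_{ij}∘e_{km} = θ whenever j ≠ k (i.e., the assignment b_{ij} ↦ e_{ij}, 0 ↦ θ is a representation of the Kronecker semigroup Γₙ in End A). If the representation is singular, i.e. trdeg_K(image e_{ij}) = 0 for all i,j, then e_{ij} = θ for all i,j, and trdeg_K(image θ) = 0. -/

import Mathlib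

open MvPolynomial

/-- The transcendence degree of an algebra `A` over `K`: the supremum of cardinalities of
algebraically independent subsets (mirrors Mathlib's `Algebra.trdeg`). -/
noncomputable def algTrdeg (K A : Type*) [CommRing K] [CommRing A] [Algebra K A] : Cardinal :=
  ⨆ ι : { s : Set A // AlgebraicIndependent K ((↑) : s → A) }, Cardinal.mk ι.1


/-- Units of a multivariate polynomial ring over a field are constants. -/
lemma isUnit_eq_C {K : Type} [Field K] : ∀ {m : ℕ} (p : MvPolynomial (Fin m) K),
    IsUnit p → ∃ c : K, p = C c := by
  intro m
  induction m with
  | zero =>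
    intro p _
    obtain ⟨c, rfl⟩ := MvPolynomial.C_surjective (Fin 0) p
    exact ⟨c, rfl⟩
  | succ m ih =>
    intro p hp
    have h1 : IsUnit (MvPolynomial.finSuccEquiv K m p) := hp.map _
    obtain ⟨r, hr, hCr⟩ := Polynomial.isUnit_iff.mp h1
    obtain ⟨c, rfl⟩ := ih r hr
    have hC : MvPolynomial.finSuccEquiv K m (C c) = Polynomial.C (C c) := by
      simp [MvPolynomial.finSuccEquiv_apply]
    refine ⟨c, (MvPolynomial.finSuccEquiv K m).injective ?_⟩
    rw [← hCr, hC]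

lemma algebraic_eq_C {K : Type} [Field K] {m : ℕ} (p : MvPolynomial (Fin m) K)
    (h : IsAlgebraic K p) : ∃ c : K, p = C c := by
  rcases eq_or_ne p 0 with rfl | hp0
  · exact ⟨0, by simp⟩
  have hint : IsIntegral K p := h.isIntegral
  have ha : (minpoly K p).coeff 0 ≠ 0 := minpoly.coeff_zero_ne_zero hint hp0
  set q := minpoly K p with hq
  have hev : Polynomial.aeval p q = 0 := minpoly.aeval K p
  have hsplit : Polynomial.X * q.divX + Polynomial.C (q.coeff 0) = q := Polynomial.X_mul_divX_add q
  have h2 : p * Polynomial.aeval p q.divX = -C (q.coeff 0) := by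
    have h3 := congrArg (Polynomial.aeval p) hsplit
    rw [map_add, map_mul, Polynomial.aeval_X, Polynomial.aeval_C, hev,
      MvPolynomial.algebraMap_eq] at h3
    exact eq_neg_of_add_eq_zero_left h3
  have hmul : p * (Polynomial.aeval p q.divX * (-(C (q.coeff 0)⁻¹))) = 1 := by
    calc p * (Polynomial.aeval p q.divX * (-(C (q.coeff 0)⁻¹)))
        = (p * Polynomial.aeval p q.divX) * (-(C (q.coeff 0)⁻¹)) := by ring
      _ = (-C (q.coeff 0)) * (-(C (q.coeff 0)⁻¹)) := by rw [h2]
      _ = 1 := by rw [neg_mul_neg, ← C_mul, mul_inv_cancel₀ ha, C_1]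
  exact isUnit_eq_C p (IsUnit.of_mul_eq_one _ hmul)

lemma algTrdeg_zero_of_algebraic {K S : Type} [Field K] [CommRing S] [Algebra K S]
    (h : ∀ x : S, IsAlgebraic K x) : algTrdeg K S = 0 := by
  refine le_antisymm ?_ zero_le
  unfold algTrdeg
  rcases isEmpty_or_nonempty { s : Set S // AlgebraicIndependent K ((↑) : s → S) } with hE | hN
  · rw [ciSup_of_empty]
    exact le_rfl
  · refine ciSup_le' fun ι => ?_
    have hempty : IsEmpty ι.1 := ⟨fun z => (ι.2.transcendental z) (h z.1)⟩
    exact le_of_eq (@Cardinal.mk_eq_zero _ hempty)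

lemma algebraic_of_algTrdeg_zero {K S : Type} [Field K] [CommRing S] [Algebra K S]
    (h : algTrdeg K S = 0) (x : S) : IsAlgebraic K x := by
  by_contra hx
  have ht : Transcendental K x := hx
  have hai : AlgebraicIndependent K (fun _ : Unit => x) :=
    (algebraicIndependent_unique_type_iff).mpr ht
  have hs : AlgebraicIndependent K ((↑) : Set.range (fun _ : Unit => x) → S) :=
    hai.to_subtype_range
  have hle := le_ciSup (f := fun ι : { s : Set S // AlgebraicIndependent K ((↑) : s → S) } =>
      Cardinal.mk ι.1) (Cardinal.bddAbove_range _)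
    ⟨Set.range (fun _ : Unit => x), hs⟩
  rw [show (⨆ ι : { s : Set S // AlgebraicIndependent K ((↑) : s → S) }, Cardinal.mk ι.1)
      = algTrdeg K S from rfl, h] at hle
  have : Cardinal.mk (Set.range (fun _ : Unit => x)) ≠ 0 := Cardinal.mk_ne_zero _
  exact this (le_antisymm hle zero_le)


/-- A singular representation of the Kronecker semigroup `Γₙ` in `End K[x₁,…,xₙ]`
(all `e_{ij}` of rank `0`) collapses: all `e_{ij}` equal the image `θ` of the zero
element, and `θ` has rank `0`. -/
theorem stmt_10 (K : Type) [Field K] (n : ℕ)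
    (θ : MvPolynomial (Fin n) K →ₐ[K] MvPolynomial (Fin n) K)
    (e : Fin n → Fin n → (MvPolynomial (Fin n) K →ₐ[K] MvPolynomial (Fin n) K))
    (hθθ : θ.comp θ = θ)
    (hθe : ∀ i j, θ.comp (e i j) = θ ∧ (e i j).comp θ = θ)
    (hee : ∀ i j k l, (e i j).comp (e k l) = if j = k then e i l else θ)
    (hsing : ∀ i j, algTrdeg K ↥(e i j).range = 0) :
    (∀ i j, e i j = θ) ∧ algTrdeg K ↥θ.range = 0 := by
  have hconst : ∀ i j (p : MvPolynomial (Fin n) K), ∃ c : K, e i j p = C c := by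
    intro i j p
    have hx : e i j p ∈ (e i j).range := ⟨p, rfl⟩
    have halg : IsAlgebraic K (e i j p) :=
      Subalgebra.isAlgebraic_iff_isAlgebraic_val.mp
        (algebraic_of_algTrdeg_zero (hsing i j) (⟨e i j p, hx⟩ : ↥(e i j).range))
    exact algebraic_eq_C _ halg
  have hkey : ∀ i j, e i j = θ := by
    intro i j
    refine AlgHom.ext fun p => ?_
    obtain ⟨c, hc⟩ := hconst i j p
    have h1 : θ (e i j p) = θ p := AlgHom.congr_fun (hθe i j).1 p
    have h2 : θ (C c) = C c := by
      have := θ.commutes c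
      rwa [MvPolynomial.algebraMap_eq] at this
    rw [hc, h2] at h1
    rw [hc, ← h1]
  refine ⟨hkey, ?_⟩
  have hθconst : ∀ p, ∃ c : K, θ p = C c := by
    rcases Nat.eq_zero_or_pos n with h0 | hpos
    · subst h0
      intro p
      obtain ⟨c, hc⟩ := MvPolynomial.C_surjective (Fin 0) (θ p)
      exact ⟨c, hc.symm⟩
    · intro p
      rw [← hkey ⟨0, hpos⟩ ⟨0, hpos⟩]
      exact hconst _ _ p
  apply algTrdeg_zero_of_algebraic
  rintro ⟨x, hx⟩
  obtain ⟨p, rfl⟩ := hx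
  refine Subalgebra.isAlgebraic_iff_isAlgebraic_val.mpr ?_
  show IsAlgebraic K (θ p)
  obtain ⟨c, hc⟩ := hθconst p
  rw [hc]
  have := isAlgebraic_algebraMap (R := K) (A := MvPolynomial (Fin n) K) c
  rwa [MvPolynomial.algebraMap_eq] at this
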